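/- arXiv:2305.17443 — 3 statements merged into one kernel-verified Lean document; each statement's English description precedes it below -/
import Mathlib

section
/- Let M ≥ 1 and let G be a connected simple graph on Fin M (an undirected connected communication graph). Let μ > 0 be a consensus gain, let x₀ : Fin M → ℝ be initial conditions, and let x : ℝ → Fin M → ℝ satisfy x(0) = x₀ and, for every i and every t, the consensus dynamics d/dt x_i(t) = μ · Σ_{j ∈ N(i)} (x_j(t) − x_i(t)), where N(i) is the neighborhood of i in G. Then there exist constants c > 0 and λ > 0 such that for all t ≥ 0 and all i, |x_i(t) − (1/M)·Σ_{j} x₀(j)| ≤ c·exp(−λ·t); in particular each x_i(t) converges exponentially to the average of the initial conditions as t → ∞. (Proposition 2 of the paper, average consensus.) -/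
open Filter

section AuxConsensus
variable {M : ℕ} (G : SimpleGraph (Fin M)) [DecidableRel G.Adj]

/-- swap lemma for adjacency double sums -/
lemma adj_swap (h : Fin M → Fin M → ℝ) :
    ∑ i, ∑ j, (if G.Adj i j then h i j else 0)
      = ∑ i, ∑ j, (if G.Adj i j then h j i else 0) := by
  rw [Finset.sum_comm]
  refine Finset.sum_congr rfl fun i _ => Finset.sum_congr rfl fun j _ => ?_
  simp [G.adj_comm]

lemma nbr_sum (f : Fin M → Fin M → ℝ) (i : Fin M) :
    ∑ j ∈ G.neighborFinset i, f i j = ∑ j, if G.Adj i j then f i j else 0 := by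
  rw [SimpleGraph.neighborFinset_eq_filter, Finset.sum_filter]

/-- L1: antisymmetric sums vanish -/
lemma adj_antisymm_zero (f : Fin M → ℝ) :
    ∑ i, ∑ j ∈ G.neighborFinset i, (f j - f i) = 0 := by
  have h1 : ∑ i, ∑ j ∈ G.neighborFinset i, (f j - f i)
      = ∑ i, ∑ j, (if G.Adj i j then f j - f i else 0) := by
    exact Finset.sum_congr rfl fun i _ => nbr_sum G (fun i j => f j - f i) i
  have h2 := adj_swap G (fun i j => f j - f i)
  have : ∑ i, ∑ j, (if G.Adj i j then f j - f i else 0)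
      = - ∑ i, ∑ j, (if G.Adj i j then f j - f i else 0) := by
    nth_rewrite 1 [h2]
    rw [← Finset.sum_neg_distrib]
    refine Finset.sum_congr rfl fun i _ => ?_
    rw [← Finset.sum_neg_distrib]
    refine Finset.sum_congr rfl fun j _ => ?_
    split <;> ring
  rw [h1]; linarith [this]

/-- energy -/
noncomputable def En (f : Fin M → ℝ) : ℝ :=
  ∑ i, ∑ j ∈ G.neighborFinset i, (f j - f i)^2

lemma En_nonneg (f : Fin M → ℝ) : 0 ≤ En G f :=
  Finset.sum_nonneg fun i _ => Finset.sum_nonneg fun j _ => sq_nonneg _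

/-- L2: energy identity -/
lemma energy_identity (f : Fin M → ℝ) :
    ∑ i, f i * ∑ j ∈ G.neighborFinset i, (f j - f i) = -(1/2) * En G f := by
  have key : 2 * ∑ i, ∑ j, (if G.Adj i j then f i * (f j - f i) else 0)
      = - ∑ i, ∑ j, (if G.Adj i j then (f j - f i)^2 else 0) := by
    have h2 := adj_swap G (fun i j => f j * (f j - f i))
    -- ∑∑ f j * (f j - f i) = ∑∑ f i * (f i - f j) = -∑∑ f i * (f j - f i)
    have h3 : ∑ i, ∑ j, (if G.Adj i j then f i * (f i - f j) else 0)
        = - ∑ i, ∑ j, (if G.Adj i j then f i * (f j - f i) else 0) := by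
      rw [← Finset.sum_neg_distrib]
      refine Finset.sum_congr rfl fun i _ => ?_
      rw [← Finset.sum_neg_distrib]
      refine Finset.sum_congr rfl fun j _ => ?_
      split <;> ring
    have expand : ∑ i, ∑ j, (if G.Adj i j then (f j - f i)^2 else 0)
        = ∑ i, ∑ j, (if G.Adj i j then f j * (f j - f i) else 0)
          - ∑ i, ∑ j, (if G.Adj i j then f i * (f j - f i) else 0) := by
      rw [← Finset.sum_sub_distrib]
      refine Finset.sum_congr rfl fun i _ => ?_
      rw [← Finset.sum_sub_distrib]
      refine Finset.sum_congr rfl fun j _ => ?_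
      split <;> ring
    rw [expand, h2, h3]; ring
  have lhs_eq : ∑ i, f i * ∑ j ∈ G.neighborFinset i, (f j - f i)
      = ∑ i, ∑ j, (if G.Adj i j then f i * (f j - f i) else 0) := by
    refine Finset.sum_congr rfl fun i _ => ?_
    rw [Finset.mul_sum, nbr_sum G (fun i j => f i * (f j - f i)) i]
  have en_eq : En G f = ∑ i, ∑ j, (if G.Adj i j then (f j - f i)^2 else 0) :=
    Finset.sum_congr rfl fun i _ => nbr_sum G (fun i j => (f j - f i)^2) i
  rw [lhs_eq, en_eq]; linarith [key]

/-- L4: one edge bound -/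
lemma edge_sq_le (f : Fin M → ℝ) {u v : Fin M} (huv : G.Adj u v) :
    (f v - f u)^2 ≤ En G f := by
  have h1 : (f v - f u)^2 ≤ ∑ j ∈ G.neighborFinset u, (f j - f u)^2 := by
    refine Finset.single_le_sum (f := fun j => (f j - f u)^2) (fun j _ => sq_nonneg _) ?_
    rwa [SimpleGraph.mem_neighborFinset]
  refine h1.trans ?_
  exact Finset.single_le_sum (f := fun i => ∑ j ∈ G.neighborFinset i, (f j - f i)^2)
    (fun i _ => Finset.sum_nonneg fun j _ => sq_nonneg _) (Finset.mem_univ u)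

/-- L5: walk bound -/
lemma walk_bound (f : Fin M → ℝ) {p q : Fin M} (w : G.Walk p q) :
    |f p - f q| ≤ w.length * Real.sqrt (En G f) := by
  induction w with
  | nil => simp
  | cons h w ih =>
    rename_i u v r
    have step : |f u - f v| ≤ Real.sqrt (En G f) := by
      have := edge_sq_le G f h
      have h2 : |f u - f v| = Real.sqrt ((f v - f u)^2) := by
        rw [Real.sqrt_sq_eq_abs, abs_sub_comm]
      rw [h2]
      exact Real.sqrt_le_sqrt this
    calc |f u - f r| ≤ |f u - f v| + |f v - f r| := abs_sub_le _ _ _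
      _ ≤ Real.sqrt (En G f) + w.length * Real.sqrt (En G f) := add_le_add step ih
      _ = (w.length + 1) * Real.sqrt (En G f) := by ring
      _ = (SimpleGraph.Walk.cons h w).length * Real.sqrt (En G f) := by
            rw [SimpleGraph.Walk.length_cons]; push_cast; ring

/-- L6: pair bound via connectivity -/
lemma pair_sq_le (hG : G.Connected) (f : Fin M → ℝ) (p q : Fin M) :
    (f p - f q)^2 ≤ (M:ℝ)^2 * En G f := by
  obtain ⟨w⟩ := hG.preconnected p q
  classical
  have hpath := w.toPath.2
  have hlen : (w.toPath.1.length : ℝ) ≤ M := by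
    have := hpath.length_lt
    rw [Fintype.card_fin] at this
    exact_mod_cast this.le
  have hb := walk_bound G f w.toPath.1
  have hE := En_nonneg G f
  have hsq : (f p - f q)^2 ≤ ((w.toPath.1.length : ℝ) * Real.sqrt (En G f))^2 := by
    rw [← sq_abs (f p - f q)]
    apply pow_le_pow_left₀ (abs_nonneg _) hb
  refine hsq.trans ?_
  rw [mul_pow, Real.sq_sqrt hE]
  apply mul_le_mul_of_nonneg_right _ hE
  apply pow_le_pow_left₀ (by positivity) hlen

/-- L7: spectral gap -/
lemma gap (hG : G.Connected) (hM : 1 ≤ M) (f : Fin M → ℝ) (hf : ∑ i, f i = 0) :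
    (2 / (M:ℝ)^3) * ∑ i, (f i)^2 ≤ En G f := by
  have hM0 : (0:ℝ) < M := by exact_mod_cast hM
  have h1 : ∀ p : Fin M, ∑ q, (f p - f q)^2 = (M:ℝ)*(f p)^2 + ∑ q, (f q)^2 := by
    intro p
    have he : ∀ q : Fin M, (f p - f q)^2 = (f p)^2 - 2*f p*f q + (f q)^2 := fun q => by ring
    simp_rw [he]
    rw [Finset.sum_add_distrib, Finset.sum_sub_distrib, Finset.sum_const, Finset.card_univ,
      Fintype.card_fin, ← Finset.mul_sum, hf, nsmul_eq_mul]
    ring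
  have expand : ∑ p, ∑ q, (f p - f q)^2 = 2*(M:ℝ)*∑ i, (f i)^2 := by
    simp_rw [h1]
    rw [Finset.sum_add_distrib, Finset.sum_const, Finset.card_univ, Fintype.card_fin,
      ← Finset.mul_sum, nsmul_eq_mul]
    ring
  have hbound : ∑ p, ∑ q, (f p - f q)^2 ≤ (M:ℝ)*((M:ℝ)*((M:ℝ)^2 * En G f)) := by
    have h2 : ∑ p, ∑ q, (f p - f q)^2 ≤ ∑ _p : Fin M, ∑ _q : Fin M, (M:ℝ)^2 * En G f :=
      Finset.sum_le_sum fun p _ => Finset.sum_le_sum fun q _ => pair_sq_le G hG f p q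
    calc ∑ p, ∑ q, (f p - f q)^2 ≤ _ := h2
      _ = (M:ℝ)*((M:ℝ)*((M:ℝ)^2 * En G f)) := by
          simp [Finset.sum_const, Finset.card_univ, nsmul_eq_mul]
          try ring
  have hE := En_nonneg G f
  rw [expand] at hbound
  rw [div_mul_eq_mul_div, div_le_iff₀ (by positivity)]
  nlinarith [hbound, hM0, hE]

end AuxConsensus

/-- Proposition 2 (average consensus): on a connected undirected communication graph,
Laplacian consensus dynamics converge exponentially to the average of the initial
conditions. -/
theorem average_consensus
    (M : ℕ) (hM : 1 ≤ M)
    (G : SimpleGraph (Fin M)) [DecidableRel G.Adj] (hG : G.Connected)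
    (μ : ℝ) (hμ : 0 < μ)
    (x₀ : Fin M → ℝ)
    (x : ℝ → Fin M → ℝ)
    (hx0 : x 0 = x₀)
    (hdyn : ∀ (i : Fin M) (t : ℝ),
      HasDerivAt (fun s => x s i)
        (μ * ∑ j ∈ G.neighborFinset i, (x t j - x t i)) t) :
    ∃ c > 0, ∃ lam > 0, ∀ t ≥ (0 : ℝ), ∀ i : Fin M,
      |x t i - (1 / (M : ℝ)) * ∑ j : Fin M, x₀ j| ≤ c * Real.exp (-lam * t) := by
  classical
  have hM0 : (0:ℝ) < M := by exact_mod_cast hM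
  set a : ℝ := (1 / (M:ℝ)) * ∑ j, x₀ j with ha
  -- sum conservation
  have hS : ∀ t : ℝ, ∑ i, x t i = ∑ i, x₀ i := by
    have hSderiv : ∀ t, HasDerivAt (fun s => ∑ i, x s i) 0 t := by
      intro t
      have h := HasDerivAt.fun_sum (u := Finset.univ) (fun i _ => hdyn i t)
      have hz : (∑ i, μ * ∑ j ∈ G.neighborFinset i, (x t j - x t i)) = 0 := by
        rw [← Finset.mul_sum, adj_antisymm_zero G (x t)]; ring
      rwa [hz] at h
    intro t
    have := is_const_of_deriv_eq_zero (f := fun s => ∑ i, x s i)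
      (fun s => (hSderiv s).differentiableAt) (fun s => (hSderiv s).deriv) t 0
    rw [this, hx0]
  set g : ℝ → Fin M → ℝ := fun t i => x t i - a with hgdef
  have hgsum : ∀ t, ∑ i, g t i = 0 := by
    intro t
    simp only [hgdef, Finset.sum_sub_distrib, Finset.sum_const, Finset.card_univ,
      Fintype.card_fin, nsmul_eq_mul, hS t, ha]
    field_simp
    ring
  set V : ℝ → ℝ := fun t => ∑ i, (x t i - a)^2 with hVdef
  have hVnonneg : ∀ t, 0 ≤ V t := fun t => Finset.sum_nonneg fun i _ => sq_nonneg _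
  set K : ℝ := 2 / (M:ℝ)^3 with hKdef
  have hK0 : 0 < K := by positivity
  set lam2 : ℝ := μ * K with hlamdef
  have hlam2 : 0 < lam2 := mul_pos hμ hK0
  -- derivative of V
  have hVderiv : ∀ t, HasDerivAt V (-(μ * En G (g t))) t := by
    intro t
    have h := HasDerivAt.fun_sum (u := Finset.univ) (fun i (_ : i ∈ Finset.univ) =>
      (((hdyn i t).sub_const a).fun_pow 2))
    have hval : ∑ i, ((2:ℕ):ℝ) * (x t i - a)^(2-1) *
        (μ * ∑ j ∈ G.neighborFinset i, (x t j - x t i)) = -(μ * En G (g t)) := by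
      have hid := energy_identity G (g t)
      have hinner : ∀ i, ∑ j ∈ G.neighborFinset i, (x t j - x t i)
          = ∑ j ∈ G.neighborFinset i, (g t j - g t i) := fun i =>
        Finset.sum_congr rfl fun j _ => by simp only [hgdef]; ring
      rw [show -(μ * En G (g t)) = 2*μ * (-(1/2) * En G (g t)) by ring, ← hid,
        Finset.mul_sum]
      refine Finset.sum_congr rfl fun i _ => ?_
      rw [hinner i]
      simp only [hgdef]
      push_cast
      ring
    rw [← hval]
    exact h
  -- V' ≤ -lam2 V
  have hVle : ∀ t, -(μ * En G (g t)) ≤ -lam2 * V t := by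
    intro t
    have hgap := gap G hG hM (g t) (hgsum t)
    have hVt : V t = ∑ i, (g t i)^2 := by
      refine Finset.sum_congr rfl fun i _ => by simp [hgdef]
    rw [hVt]
    rw [hlamdef, hKdef]
    nlinarith [hgap, hμ.le, Finset.sum_nonneg (fun i (_ : i ∈ Finset.univ) => sq_nonneg (g t i))]
  -- Gronwall
  set F : ℝ → ℝ := fun t => V t * Real.exp (lam2 * t) with hFdef
  have hFderiv : ∀ t, HasDerivAt F
      (-(μ * En G (g t)) * Real.exp (lam2 * t) + V t * (Real.exp (lam2 * t) * lam2)) t := by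
    intro t
    have h := (hVderiv t).mul (((hasDerivAt_id t).const_mul lam2).exp)
    simp only [id_eq, mul_one] at h
    exact h
  have hFle : ∀ t, -(μ * En G (g t)) * Real.exp (lam2 * t)
      + V t * (Real.exp (lam2 * t) * lam2) ≤ 0 := by
    intro t
    have h1 := hVle t
    have h2 := Real.exp_pos (lam2 * t)
    nlinarith [h1, h2, hVnonneg t]
  have hanti : AntitoneOn F (Set.Ici (0:ℝ)) := by
    refine antitoneOn_of_deriv_nonpos (convex_Ici 0) ?_ ?_ ?_
    · exact (Differentiable.continuous (fun t => (hFderiv t).differentiableAt)).continuousOn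
    · exact (Differentiable.differentiableOn (fun t => (hFderiv t).differentiableAt))
    · intro t _
      rw [(hFderiv t).deriv]
      exact hFle t
  have hVbound : ∀ t ≥ (0:ℝ), V t ≤ V 0 * Real.exp (-(lam2 * t)) := by
    intro t ht
    have hFt : V t * Real.exp (lam2 * t) ≤ V 0 := by
      have := hanti (Set.self_mem_Ici) (Set.mem_Ici.mpr ht) ht
      simpa [hFdef] using this
    rw [Real.exp_neg, ← div_eq_mul_inv]
    exact (le_div_iff₀ (Real.exp_pos _)).mpr hFt
  refine ⟨Real.sqrt (V 0) + 1, by positivity, lam2/2, by positivity, fun t ht i => ?_⟩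
  have hsingle : (x t i - a)^2 ≤ V t :=
    Finset.single_le_sum (f := fun i => (x t i - a)^2) (fun i _ => sq_nonneg _)
      (Finset.mem_univ i)
  have h1 : (x t i - a)^2 ≤ V 0 * Real.exp (-(lam2 * t)) := hsingle.trans (hVbound t ht)
  have h2 : |x t i - a| = Real.sqrt ((x t i - a)^2) := (Real.sqrt_sq_eq_abs _).symm
  have hexp : Real.exp (-(lam2 * t)) = (Real.exp (-(lam2/2) * t))^2 := by
    rw [sq, ← Real.exp_add]; ring_nf
  have h3 : |x t i - a| ≤ Real.sqrt (V 0) * Real.exp (-(lam2/2) * t) := by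
    rw [h2]
    refine (Real.sqrt_le_sqrt h1).trans (le_of_eq ?_)
    rw [Real.sqrt_mul (hVnonneg 0), hexp, Real.sqrt_sq (Real.exp_pos _).le]
  calc |x t i - a| ≤ Real.sqrt (V 0) * Real.exp (-(lam2/2) * t) := h3
    _ ≤ (Real.sqrt (V 0) + 1) * Real.exp (-(lam2/2) * t) := by
        have := Real.exp_pos (-(lam2/2) * t)
        nlinarith [Real.sqrt_nonneg (V 0)]
end

section
/- Let h > 0, τ_0 > 0, K_{p_0} > 0, K_{d_0} > 0 with K_{d_0} > τ_0 K_{p_0}. Then the 4×4 real matrix F = [[0, 1, −h, 0], [0, 0, −1, 0], [0, 0, −1/τ_0, 1/τ_0], [K_{p_0}/h, K_{d_0}/h, −K_{d_0}, −1/h]] is Hurwitz: every eigenvalue of F (as a complex matrix) has negative real part. (Intermediate claim in the proof of Theorem 1: the homogenized follower closed-loop state matrix is Hurwitz under the Routh–Hurwitz conditions h > 0, K_{p_0}, K_{d_0} > 0, K_{d_0} > τ_0 K_{p_0}.) -/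
set_option maxHeartbeats 1000000 in
private theorem detf4_aux {R : Type*} [CommRing R] (a b c d e f g i j k l m n o p q : R) :
    (!![a,b,c,d; e,f,g,i; j,k,l,m; n,o,p,q]).det =
      a*(f*(l*q-m*p) - g*(k*q-m*o) + i*(k*p-l*o))
    - b*(e*(l*q-m*p) - g*(j*q-m*n) + i*(j*p-l*n))
    + c*(e*(k*q-m*o) - f*(j*q-m*n) + i*(j*o-k*n))
    - d*(e*(k*p-l*o) - f*(j*p-l*n) + g*(j*o-k*n)) := by
  simp [Matrix.det_succ_row_zero, Fin.sum_univ_succ, Fin.succAbove,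
    Fin.castSucc, Fin.castAdd, Fin.castLE, show ((2:Fin 3):ℕ)=2 from rfl]
  ring

private theorem cubic_neg_re_aux (t Kd Kp : ℝ) (ht : 0 < t) (hKd : 0 < Kd) (hKp : 0 < Kp)
    (hRH : t * Kp < Kd) (μ : ℂ)
    (heq : μ^3 + (t:ℂ)⁻¹*μ^2 + (t:ℂ)⁻¹*(Kd:ℂ)*μ + (t:ℂ)⁻¹*(Kp:ℂ) = 0) :
    μ.re < 0 := by
  have ht' : (t:ℂ) ≠ 0 := by exact_mod_cast ht.ne'
  have heq' : (t:ℂ)*μ^3 + μ^2 + (Kd:ℂ)*μ + (Kp:ℂ) = 0 := by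
    have := congrArg (fun z => (t:ℂ) * z) heq
    simpa [mul_add, ← mul_assoc, mul_inv_cancel₀ ht'] using this
  set x := μ.re with hx'
  set y := μ.im with hy'
  by_contra hcon
  push_neg at hcon
  have hre : t*(x^3 - 3*x*y^2) + (x^2 - y^2) + Kd*x + Kp = 0 := by
    have := congrArg Complex.re heq'
    simp [pow_succ, Complex.mul_re, Complex.mul_im] at this
    linarith [this]
  have him : y * (t*(3*x^2 - y^2) + 2*x + Kd) = 0 := by
    have := congrArg Complex.im heq'
    simp [pow_succ, Complex.mul_re, Complex.mul_im] at this
    nlinarith [this]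
  rcases mul_eq_zero.mp him with hy0 | hE
  · rw [hy0] at hre
    nlinarith [pow_nonneg hcon 3, pow_nonneg hcon 2, mul_nonneg hKd.le hcon]
  · have key : 8*t^2*x^3 + 8*t*x^2 + (2*t*Kd+2)*x + (Kd - t*Kp) = 0 := by
      linear_combination (-t)*hre + (3*t*x+1)*hE
    nlinarith [pow_nonneg hcon 3, pow_nonneg hcon 2, mul_pos ht ht,
      mul_nonneg (mul_nonneg ht.le ht.le) (pow_nonneg hcon 3),
      mul_nonneg ht.le (pow_nonneg hcon 2),
      mul_nonneg (mul_nonneg ht.le hKd.le) hcon]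

/-- The homogenized follower closed-loop state matrix is Hurwitz under the
Routh–Hurwitz conditions h > 0, K_{p₀}, K_{d₀} > 0, K_{d₀} > τ₀ K_{p₀}
(intermediate claim in the proof of Theorem 1). -/
theorem follower_matrix_hurwitz
    (h τ0 Kp0 Kd0 : ℝ) (hh : 0 < h) (hτ0 : 0 < τ0)
    (hKp0 : 0 < Kp0) (hKd0 : 0 < Kd0) (hRH : τ0 * Kp0 < Kd0) :
    ∀ μ ∈ spectrum ℂ
      ((!![0, 1, -h, 0;
           0, 0, -1, 0;
           0, 0, -1/τ0, 1/τ0;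
           Kp0/h, Kd0/h, -Kd0, -1/h] : Matrix (Fin 4) (Fin 4) ℝ).map
        Complex.ofReal),
      μ.re < 0 := by
  intro μ hμ
  have hh' : (h:ℂ) ≠ 0 := by exact_mod_cast hh.ne'
  have ht' : (τ0:ℂ) ≠ 0 := by exact_mod_cast hτ0.ne'
  -- from spectrum membership to vanishing determinant
  have hdet0 : (μ • (1 : Matrix (Fin 4) (Fin 4) ℂ) -
      (!![0, 1, -h, 0;
           0, 0, -1, 0;
           0, 0, -1/τ0, 1/τ0;
           Kp0/h, Kd0/h, -Kd0, -1/h] : Matrix (Fin 4) (Fin 4) ℝ).map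
        Complex.ofReal).det = 0 := by
    rw [spectrum.mem_iff] at hμ
    rw [Matrix.isUnit_iff_isUnit_det, isUnit_iff_ne_zero, not_ne_iff] at hμ
    rw [← hμ]
    congr 1
    simp [Algebra.algebraMap_eq_smul_one]
  -- factorization of the characteristic determinant
  have hfact : (μ • (1 : Matrix (Fin 4) (Fin 4) ℂ) -
      (!![0, 1, -h, 0;
           0, 0, -1, 0;
           0, 0, -1/τ0, 1/τ0;
           Kp0/h, Kd0/h, -Kd0, -1/h] : Matrix (Fin 4) (Fin 4) ℝ).map
        Complex.ofReal).det
      = (μ + (h:ℂ)⁻¹) * (μ^3 + (τ0:ℂ)⁻¹*μ^2 + (τ0:ℂ)⁻¹*(Kd0:ℂ)*μ + (τ0:ℂ)⁻¹*(Kp0:ℂ)) := by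
    set a : ℂ := (h:ℂ)⁻¹ with ha'
    set b : ℂ := (τ0:ℂ)⁻¹ with hb'
    have ha : (h:ℂ) * a = 1 := mul_inv_cancel₀ hh'
    have hM : μ • (1 : Matrix (Fin 4) (Fin 4) ℂ) -
        (!![0, 1, -h, 0;
             0, 0, -1, 0;
             0, 0, -1/τ0, 1/τ0;
             Kp0/h, Kd0/h, -Kd0, -1/h] : Matrix (Fin 4) (Fin 4) ℝ).map
          Complex.ofReal
        = !![μ, -1, (h:ℂ), 0;
             0, μ, 1, 0;
             0, 0, μ + b, -b;
             -((Kp0:ℂ)*a), -((Kd0:ℂ)*a), (Kd0:ℂ), μ + a] := by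
      ext i j
      fin_cases i <;> fin_cases j <;>
        simp [Matrix.one_apply, ha', hb', div_eq_mul_inv]
    rw [hM, detf4_aux]
    linear_combination ((Kp0:ℂ) * b * μ) * ha
  rw [hfact] at hdet0
  rcases mul_eq_zero.mp hdet0 with h1 | h2
  · have hμ' : μ = -((h:ℂ)⁻¹) := by linear_combination h1
    rw [hμ']
    have : ((h:ℂ)⁻¹) = ((h⁻¹ : ℝ) : ℂ) := by push_cast; ring
    rw [this]
    simp only [Complex.neg_re, Complex.ofReal_re]
    simpa using inv_pos.mpr hh
  · exact cubic_neg_re_aux τ0 Kd0 Kp0 hτ0 hKd0 hKp0 hRH μ h2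
end

section
/- Let M ≥ 1 and let G be a connected simple graph on Fin M. Define sgn₊ : ℝ → ℝ by sgn₊(y) = 1 if y > 0 and sgn₊(y) = 0 if y ≤ 0. Let x : ℝ → Fin M → ℝ be such that each x_i is continuous and satisfies, for all t ≥ 0, x_i(t) = x_i(0) + ∫₀ᵗ sgn₊( Σ_{j ∈ N(i)} (x_j(s) − x_i(s)) ) ds, where N(i) is the neighborhood of i in G. Then the states reach the maximum of the initial conditions in finite time: there exists T ≥ 0 such that for all t ≥ T and all i, x_i(t) = max_j x_j(0). (Proposition 3 of the paper, applied to the estimates ā_{min,i} of the maximum of the minimum accelerations: max-consensus in finite time.) -/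
open Filter MeasureTheory Set Metric in
lemma cont_sup'' {ι : Type*} {s : Finset ι} (hs : s.Nonempty) (f : ι → ℝ → ℝ)
    (hf : ∀ i, Continuous (f i)) : Continuous fun t => s.sup' hs (fun i => f i t) := by
  induction hs using Finset.Nonempty.cons_induction with
  | singleton i => simpa using hf i
  | cons a s ha hs ih =>
    have h : (fun t => (Finset.cons a s ha).sup' (Finset.cons_nonempty ha) (fun i => f i t))
        = fun t => f a t ⊔ s.sup' hs (fun i => f i t) := by
      funext t; exact Finset.sup'_cons hs (fun i => f i t) (hb := ha)
    rw [h]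
    exact (hf a).max ih

open Filter MeasureTheory Set Metric Topology


lemma walk_cross' {V : Type*} {G : SimpleGraph V} {P : V → Prop}
    {u v : V} (w : G.Walk u v) (hu : P u) (hv : ¬ P v) :
    ∃ a b, G.Adj a b ∧ P a ∧ ¬ P b := by
  induction w with
  | nil => exact absurd hu hv
  | @cons u' v' w' h p ih =>
    by_cases hq : P v'
    · exact ih hq hv
    · exact ⟨_, _, h, hu, hq⟩

lemma exists_pos_sum' {M : ℕ} (G : SimpleGraph (Fin M)) [DecidableRel G.Adj]
    (hG : G.Connected) (y : Fin M → ℝ) {a b : Fin M} (hab : y a < y b) :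
    ∃ i, 0 < ∑ j ∈ G.neighborFinset i, (y j - y i) := by
  classical
  obtain ⟨i0, -, hi0⟩ := Finset.exists_min_image Finset.univ y ⟨a, Finset.mem_univ a⟩
  have hmin : ∀ j, y i0 ≤ y j := fun j => hi0 j (Finset.mem_univ j)
  obtain ⟨w⟩ := hG.preconnected i0 b
  obtain ⟨c, d, hadj, hc, hd⟩ := walk_cross' (P := fun k => y k ≤ y i0) w le_rfl
    (not_le.2 (lt_of_le_of_lt (hmin a) hab))
  refine ⟨c, Finset.sum_pos' (fun j _ => ?_) ⟨d, ?_, ?_⟩⟩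
  · exact sub_nonneg.2 (le_trans hc (hmin j))
  · exact (G.mem_neighborFinset c d).2 hadj
  · exact sub_pos.2 (lt_of_le_of_lt hc (not_le.1 hd))

/-- Proposition 3 (max-consensus in finite time): under the discontinuous
consensus dynamics with sgn₊ (in integral/Carathéodory form), all states reach
the maximum of the initial conditions in finite time. -/
theorem max_consensus_finite_time
    (M : ℕ) (hM : 1 ≤ M)
    (G : SimpleGraph (Fin M)) [DecidableRel G.Adj] (hG : G.Connected)
    (sgnPos : ℝ → ℝ)
    (hsgn : ∀ y : ℝ, sgnPos y = if 0 < y then 1 else 0)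
    (x : ℝ → Fin M → ℝ)
    (hcont : ∀ i : Fin M, Continuous (fun t => x t i))
    (hdyn : ∀ (i : Fin M) (t : ℝ), 0 ≤ t →
      x t i = x 0 i + ∫ s in (0 : ℝ)..t,
        sgnPos (∑ j ∈ G.neighborFinset i, (x s j - x s i))) :
    ∃ T ≥ (0 : ℝ), ∀ t ≥ T, ∀ i : Fin M,
      x t i = Finset.univ.sup' ⟨⟨0, by omega⟩, Finset.mem_univ _⟩ (x 0) := by
  classical
  have hne : (Finset.univ : Finset (Fin M)).Nonempty := by
    have : M ≠ 0 := by omega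
    exact ⟨⟨0, by omega⟩, Finset.mem_univ _⟩
  set m : ℝ := Finset.univ.sup' hne (x 0) with hm
  set g : Fin M → ℝ → ℝ :=
    fun i σ => if 0 < (∑ j ∈ G.neighborFinset i, (x σ j - x σ i)) then 1 else 0 with hgdef
  have hsum_cont : ∀ i, Continuous fun σ => ∑ j ∈ G.neighborFinset i, (x σ j - x σ i) :=
    fun i => continuous_finset_sum _ fun j _ => (hcont j).sub (hcont i)
  have hg_nonneg : ∀ i σ, 0 ≤ g i σ := by
    intro i σ; rw [hgdef]; dsimp only; split <;> norm_num
  have hg_le_one : ∀ i σ, g i σ ≤ 1 := by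
    intro i σ; rw [hgdef]; dsimp only; split <;> norm_num
  have hg_meas : ∀ i, Measurable (g i) := fun i =>
    Measurable.ite (measurableSet_lt measurable_const (hsum_cont i).measurable)
      measurable_const measurable_const
  have hg_int : ∀ (i : Fin M) (a b : ℝ), IntervalIntegrable (g i) volume a b := by
    intro i a b
    rw [intervalIntegrable_iff]
    refine Measure.integrableOn_of_bounded ?_ (hg_meas i).aestronglyMeasurable
      (M := 1) (ae_of_all _ fun σ => ?_)
    · rw [Set.uIoc]; exact measure_Ioc_lt_top.ne
    · rw [Real.norm_eq_abs, abs_le]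
      exact ⟨by linarith [hg_nonneg i σ], hg_le_one i σ⟩
  have hx_eq : ∀ (i : Fin M) (t : ℝ), 0 ≤ t → x t i = x 0 i + ∫ σ in (0:ℝ)..t, g i σ := by
    intro i t ht
    rw [hdyn i t ht]
    congr 1
    apply intervalIntegral.integral_congr
    intro σ _
    show sgnPos _ = _
    rw [hsgn]
  have hx_sub : ∀ (i : Fin M) (s t : ℝ), 0 ≤ s → 0 ≤ t →
      x t i - x s i = ∫ σ in s..t, g i σ := by
    intro i s t hs ht
    rw [hx_eq i t ht, hx_eq i s hs, add_sub_add_left_eq_sub,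
      intervalIntegral.integral_interval_sub_left (hg_int i 0 t) (hg_int i 0 s)]
  have hx_mono : ∀ (i : Fin M) ⦃s t : ℝ⦄, 0 ≤ s → s ≤ t → x s i ≤ x t i := by
    intro i s t hs hst
    have h := hx_sub i s t hs (hs.trans hst)
    have h2 : 0 ≤ ∫ σ in s..t, g i σ :=
      intervalIntegral.integral_nonneg hst fun σ _ => hg_nonneg i σ
    linarith
  have hx_lip : ∀ (i : Fin M) (s t : ℝ), 0 ≤ s → s ≤ t → x t i - x s i ≤ t - s := by
    intro i s t hs hst
    rw [hx_sub i s t hs (hs.trans hst)]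
    calc ∫ σ in s..t, g i σ ≤ ∫ _σ in s..t, (1:ℝ) :=
          intervalIntegral.integral_mono_on hst (hg_int i s t) intervalIntegrable_const
            (fun σ _ => hg_le_one i σ)
      _ = t - s := by simp
  set u : ℝ → ℝ := fun t => Finset.univ.sup' hne (x (max t 0)) with hudef
  have husup : ∀ t, 0 ≤ t → u t = Finset.univ.sup' hne (x t) := by
    intro t ht; rw [hudef]; dsimp only; rw [max_eq_left ht]
  have hu0 : u 0 = m := by rw [husup 0 le_rfl]
  have hu_mono : Monotone u := by
    intro s t hst
    apply Finset.sup'_le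
    intro i _
    exact le_trans (hx_mono i (le_max_right s 0) (max_le_max hst le_rfl))
      (Finset.le_sup' _ (Finset.mem_univ i))
  have hu_cont : Continuous u := by
    have h := cont_sup'' hne (fun i t => x (max t 0) i)
      (fun i => (hcont i).comp (continuous_id.max continuous_const))
    exact h
  have hu_lip : ∀ s t : ℝ, s ≤ t → u t - u s ≤ t - s := by
    intro s t hst
    obtain ⟨i, -, hiu⟩ := Finset.exists_mem_eq_sup' hne (x (max t 0))
    have h1 : x (max s 0) i ≤ u s := Finset.le_sup' _ (Finset.mem_univ i)
    have h2 : x (max t 0) i - x (max s 0) i ≤ max t 0 - max s 0 :=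
      hx_lip i _ _ (le_max_right _ _) (max_le_max hst le_rfl)
    have h3 : max t 0 - max s 0 ≤ t - s := by
      rcases le_total s 0 with hs'|hs' <;> rcases le_total t 0 with ht'|ht' <;>
        simp [max_eq_left, max_eq_right, hs', ht'] <;> linarith
    have h4 : u t = x (max t 0) i := hiu
    linarith
  -- Stieltjes functions
  have hVmono : Monotone (fun t => t - u t) := by
    intro s t hst; dsimp only; have := hu_lip s t hst; linarith
  set U : StieltjesFunction ℝ :=
    ⟨u, hu_mono, fun z => (hu_cont.continuousAt).continuousWithinAt⟩ with hUdef
  set V : StieltjesFunction ℝ :=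
    ⟨fun t => t - u t, hVmono,
      fun z => ((continuous_id.sub hu_cont).continuousAt).continuousWithinAt⟩ with hVdef
  have hUcoe : ∀ t, U t = u t := fun t => rfl
  have hVcoe : ∀ t, V t = t - u t := fun t => rfl
  have hUV : U.measure + V.measure = volume := by
    refine (Measure.ext_of_Ioc volume (U.measure + V.measure) (fun a b hab => ?_)).symm
    rw [Measure.add_apply, StieltjesFunction.measure_Ioc, StieltjesFunction.measure_Ioc,
      Real.volume_Ioc, hUcoe, hUcoe, hVcoe, hVcoe,
      ← ENNReal.ofReal_add (by have := hu_mono hab.le; linarith)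
        (by have := hu_lip a b hab.le; linarith)]
    congr 1
    ring
  have hUac : U.measure ≪ volume := by
    refine Measure.AbsolutelyContinuous.mk fun s hms hs => ?_
    have h1 : (U.measure + V.measure) s = 0 := by rw [hUV]; exact hs
    rw [Measure.add_apply] at h1
    exact le_antisymm (le_trans le_self_add h1.le) zero_le
  -- Lebesgue points
  have hgloc : ∀ i, LocallyIntegrable (g i) volume := by
    intro i
    refine (locallyIntegrable_const (1:ℝ)).mono (hg_meas i).aestronglyMeasurable
      (ae_of_all _ fun σ => ?_)
    rw [Real.norm_eq_abs, norm_one, abs_le]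
    exact ⟨by linarith [hg_nonneg i σ], hg_le_one i σ⟩
  have hLeb : ∀ᵐ σ ∂(volume : Measure ℝ), ∀ i, Tendsto
      (fun r => ⨍ y in closedBall σ r, g i y) (𝓝[>] 0) (𝓝 (g i σ)) := by
    rw [MeasureTheory.ae_all_iff]
    intro i
    filter_upwards [IsUnifLocDoublingMeasure.ae_tendsto_average (μ := (volume : Measure ℝ))
      (hgloc i) 1] with σ hσ
    refine hσ (fun r => σ) id tendsto_id ?_
    filter_upwards [self_mem_nhdsWithin] with r hr
    have h0 : (0:ℝ) < r := hr
    exact mem_closedBall_self (by simpa using h0.le)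
  -- the key a.e. vanishing of the derivative of u
  have key : ∀ᵐ σ ∂(volume : Measure ℝ), 0 < σ → U.measure.rnDeriv volume σ = 0 := by
    filter_upwards [hLeb, Besicovitch.ae_tendsto_rnDeriv U.measure volume] with σ hσ1 hσ2 hσpos
    set A : Finset (Fin M) := Finset.univ.filter (fun i => x σ i = u σ) with hA
    have hxle : ∀ j, x σ j ≤ u σ := by
      intro j
      rw [husup σ hσpos.le]
      exact Finset.le_sup' _ (Finset.mem_univ j)
    have hgA : ∀ i ∈ A, g i σ = 0 := by
      intro i hi
      have hxiσ : x σ i = u σ := by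
        have := Finset.mem_filter.1 (hA ▸ hi)
        exact this.2
      have hsum : (∑ j ∈ G.neighborFinset i, (x σ j - x σ i)) ≤ 0 :=
        Finset.sum_nonpos fun j _ => sub_nonpos.2 (by rw [hxiσ]; exact hxle j)
      rw [hgdef]; dsimp only; rw [if_neg (not_lt.2 hsum)]
    have hsum0 : Tendsto (fun r => ∑ i ∈ A, ⨍ y in closedBall σ r, g i y) (𝓝[>] (0:ℝ))
        (𝓝 0) := by
      have h := tendsto_finset_sum A (fun i (_ : i ∈ A) => hσ1 i)
      rwa [Finset.sum_eq_zero hgA] at h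
    have hev : ∀ᶠ r in 𝓝[>] (0:ℝ),
        U.measure (closedBall σ r) / volume (closedBall σ r)
          ≤ ENNReal.ofReal (∑ i ∈ A, ⨍ y in closedBall σ r, g i y) := by
      have h1 : ∀ᶠ r in 𝓝[>] (0:ℝ), r ∈ Ioo (0:ℝ) σ :=
        Ioo_mem_nhdsGT_of_mem ⟨le_rfl, hσpos⟩
      have h2 : ∀ᶠ r in 𝓝[>] (0:ℝ), ∀ j, j ∉ A → x (σ + r) j < u σ := by
        rw [eventually_all]
        intro j
        by_cases hj : j ∈ A
        · exact Eventually.of_forall fun r hj' => absurd hj hj'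
        · have hne' : x σ j ≠ u σ := by
            intro hEq
            exact hj (by rw [hA]; exact Finset.mem_filter.2 ⟨Finset.mem_univ j, hEq⟩)
          have hlt : x σ j < u σ := lt_of_le_of_ne (hxle j) hne'
          have hct : Tendsto (fun r : ℝ => x (σ + r) j) (𝓝[>] 0) (𝓝 (x σ j)) := by
            have hc1 : Tendsto (fun r : ℝ => σ + r) (𝓝 (0:ℝ)) (𝓝 σ) := by
              have h : Tendsto (fun r : ℝ => σ + r) (𝓝 (0:ℝ)) (𝓝 (σ + 0)) :=
                Filter.Tendsto.const_add σ (f := fun r : ℝ => r) tendsto_id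
              simpa using h
            exact ((hcont j).tendsto σ).comp (hc1.mono_left nhdsWithin_le_nhds)
          filter_upwards [hct.eventually (eventually_lt_nhds hlt)] with r hr _
          exact hr
      filter_upwards [h1, h2] with r hr hrA
      obtain ⟨hr0, hrσ⟩ := hr
      obtain ⟨i, -, hiu⟩ := Finset.exists_mem_eq_sup' hne (x (σ + r))
      have hiu' : u (σ + r) = x (σ + r) i := by rw [husup (σ + r) (by linarith)]; exact hiu
      have hiuA : i ∈ A := by
        by_contra hiA
        have hlt := hrA i hiA
        have h6 : u σ ≤ u (σ + r) := hu_mono (by linarith)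
        rw [hiu'] at h6
        linarith
      have hcb : closedBall σ r = Icc (σ - r) (σ + r) := Real.closedBall_eq_Icc
      have hll : Function.leftLim u (σ - r) = u (σ - r) :=
        leftLim_eq_of_tendsto
          ((hu_cont.tendsto _).mono_left nhdsWithin_le_nhds)
      have hll' : Function.leftLim (U : ℝ → ℝ) (σ - r) = u (σ - r) := hll
      have hUm : U.measure (closedBall σ r) = ENNReal.ofReal (u (σ + r) - u (σ - r)) := by
        rw [hcb, StieltjesFunction.measure_Icc, hUcoe, hll']
      have hvol : volume (closedBall σ r) = ENNReal.ofReal (2 * r) := Real.volume_closedBall σ r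
      have e3 : x (σ + r) i - x (σ - r) i = ∫ y in closedBall σ r, g i y := by
        rw [hx_sub i (σ - r) (σ + r) (by linarith) (by linarith), hcb,
          MeasureTheory.integral_Icc_eq_integral_Ioc,
          ← intervalIntegral.integral_of_le (by linarith : σ - r ≤ σ + r)]
      have e1 : x (σ - r) i ≤ u (σ - r) := by
        rw [husup (σ - r) (by linarith)]
        exact Finset.le_sup' _ (Finset.mem_univ i)
      have e4 : ∀ k ∈ A, 0 ≤ ∫ y in closedBall σ r, g k y := fun k _ =>
        setIntegral_nonneg measurableSet_closedBall (fun y _ => hg_nonneg k y)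
      have hd : u (σ + r) - u (σ - r) ≤ ∑ k ∈ A, ∫ y in closedBall σ r, g k y := by
        calc u (σ + r) - u (σ - r) ≤ x (σ + r) i - x (σ - r) i := by
              rw [hiu']; linarith
          _ = ∫ y in closedBall σ r, g i y := e3
          _ ≤ ∑ k ∈ A, ∫ y in closedBall σ r, g k y := Finset.single_le_sum e4 hiuA
      have havg : ∑ k ∈ A, ⨍ y in closedBall σ r, g k y
          = (2 * r)⁻¹ * ∑ k ∈ A, ∫ y in closedBall σ r, g k y := by
        rw [Finset.mul_sum]
        refine Finset.sum_congr rfl fun k _ => ?_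
        rw [setAverage_eq, measureReal_def, hvol, ENNReal.toReal_ofReal (by linarith), smul_eq_mul]
      rw [hUm, hvol, ← ENNReal.ofReal_div_of_pos (by linarith)]
      apply ENNReal.ofReal_le_ofReal
      rw [havg, div_eq_inv_mul]
      exact mul_le_mul_of_nonneg_left hd (by positivity)
    have hquot0 : Tendsto (fun r => U.measure (closedBall σ r) / volume (closedBall σ r))
        (𝓝[>] (0:ℝ)) (𝓝 0) := by
      have hof : Tendsto (fun r => ENNReal.ofReal (∑ i ∈ A, ⨍ y in closedBall σ r, g i y))
          (𝓝[>] (0:ℝ)) (𝓝 0) := by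
        have := ENNReal.tendsto_ofReal hsum0
        simpa using this
      exact tendsto_of_tendsto_of_tendsto_of_le_of_le' tendsto_const_nhds hof
        (Eventually.of_forall fun r => zero_le) hev
    exact tendsto_nhds_unique hσ2 hquot0
  -- the max is constant on nonnegative times
  have humt : ∀ t : ℝ, 0 ≤ t → u t = m := by
    intro t ht
    have h1 : U.measure (Ioc 0 t) = 0 := by
      have hwd := Measure.withDensity_rnDeriv_eq U.measure volume hUac
      rw [← hwd, withDensity_apply _ measurableSet_Ioc]
      have hae : (fun σ => U.measure.rnDeriv volume σ)
          =ᵐ[volume.restrict (Ioc 0 t)] 0 := by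
        rw [EventuallyEq, ae_restrict_iff' measurableSet_Ioc]
        filter_upwards [key] with σ h hin
        exact h hin.1
      rw [lintegral_congr_ae hae]
      simp
    have h2 : ENNReal.ofReal (u t - u 0) = 0 := by
      rw [← hUcoe, ← hUcoe, ← StieltjesFunction.measure_Ioc]
      exact h1
    rw [ENNReal.ofReal_eq_zero] at h2
    have h4 : u 0 ≤ u t := hu_mono ht
    have : u t = u 0 := le_antisymm (by linarith) h4
    rw [this, hu0]
  have hle : ∀ t : ℝ, 0 ≤ t → ∀ i, x t i ≤ m := by
    intro t ht i
    have h := Finset.le_sup' (x t) (Finset.mem_univ i)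
    rw [← husup t ht, humt t ht] at h
    exact h
  have hattain : ∀ t : ℝ, 0 ≤ t → ∃ k, x t k = m := by
    intro t ht
    obtain ⟨k, -, hk⟩ := Finset.exists_mem_eq_sup' hne (x t)
    exact ⟨k, by rw [← hk, ← husup t ht, humt t ht]⟩
  set K : ℝ := ∑ i : Fin M, (m - x 0 i) with hK
  have hK0 : 0 ≤ K := Finset.sum_nonneg fun i _ => sub_nonneg.2 (hle 0 le_rfl i)
  set N : Set ℝ := {σ | ∃ i, x σ i < m} with hN
  have hNmeas : MeasurableSet N := by
    have hEq : N = ⋃ i : Fin M, {σ | x σ i < m} := by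
      ext σ; simp [hN]
    rw [hEq]
    exact MeasurableSet.iUnion fun i =>
      measurableSet_lt (hcont i).measurable measurable_const
  have hsumg : ∀ σ : ℝ, 0 ≤ σ → σ ∈ N → (1:ℝ) ≤ ∑ i : Fin M, g i σ := by
    intro σ hσ hσN
    obtain ⟨i, hi⟩ := hσN
    obtain ⟨k, hk⟩ := hattain σ hσ
    obtain ⟨i', hi'⟩ := exists_pos_sum' G hG (x σ) (a := i) (b := k) (by rw [hk]; exact hi)
    have hg1 : g i' σ = 1 := by rw [hgdef]; dsimp only; rw [if_pos hi']
    calc (1:ℝ) = g i' σ := hg1.symm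
      _ ≤ ∑ i : Fin M, g i σ :=
        Finset.single_le_sum (fun j _ => hg_nonneg j σ) (Finset.mem_univ i')
  have hgsum_meas : Measurable fun σ => ∑ i : Fin M, g i σ :=
    Finset.measurable_sum _ fun i _ => hg_meas i
  have hboundn : ∀ n : ℕ, volume (N ∩ Ioc 0 (n:ℝ)) ≤ ENNReal.ofReal K := by
    intro n
    have hint : IntegrableOn (fun σ => ∑ i : Fin M, g i σ) (Ioc (0:ℝ) n) volume := by
      refine Measure.integrableOn_of_bounded ?_ hgsum_meas.aestronglyMeasurable
        (M := (M:ℝ)) (ae_of_all _ fun σ => ?_)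
      · exact measure_Ioc_lt_top.ne
      · rw [Real.norm_eq_abs, abs_le]
        constructor
        · have h5 : (0:ℝ) ≤ ∑ i : Fin M, g i σ := Finset.sum_nonneg fun i _ => hg_nonneg i σ
          have hM0 : (0:ℝ) ≤ (M:ℝ) := Nat.cast_nonneg M
          linarith
        · calc ∑ i : Fin M, g i σ ≤ ∑ _i : Fin M, (1:ℝ) :=
              Finset.sum_le_sum fun i _ => hg_le_one i σ
            _ = (M:ℝ) := by simp
    have h1 : volume (N ∩ Ioc 0 (n:ℝ))
        ≤ ENNReal.ofReal (∫ σ in Ioc (0:ℝ) n, ∑ i : Fin M, g i σ) := by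
      calc volume (N ∩ Ioc 0 (n:ℝ)) = ∫⁻ _σ in N ∩ Ioc 0 (n:ℝ), 1 ∂volume := by
            rw [setLIntegral_one]
        _ ≤ ∫⁻ σ in N ∩ Ioc 0 (n:ℝ), ENNReal.ofReal (∑ i : Fin M, g i σ) ∂volume := by
            refine setLIntegral_mono' (hNmeas.inter measurableSet_Ioc) fun σ hσ => ?_
            exact ENNReal.one_le_ofReal.2 (hsumg σ hσ.2.1.le hσ.1)
        _ ≤ ∫⁻ σ in Ioc (0:ℝ) n, ENNReal.ofReal (∑ i : Fin M, g i σ) ∂volume :=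
            lintegral_mono_set inter_subset_right
        _ = ENNReal.ofReal (∫ σ in Ioc (0:ℝ) n, ∑ i : Fin M, g i σ) :=
            (ofReal_integral_eq_lintegral_ofReal hint
              (ae_of_all _ fun σ => Finset.sum_nonneg fun j _ => hg_nonneg j σ)).symm
    refine h1.trans (ENNReal.ofReal_le_ofReal ?_)
    have hn0 : (0:ℝ) ≤ (n:ℝ) := Nat.cast_nonneg n
    have h2 : ∫ σ in Ioc (0:ℝ) n, (∑ i : Fin M, g i σ) ∂volume
        = ∑ i : Fin M, ∫ σ in Ioc (0:ℝ) n, g i σ ∂volume :=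
      integral_finset_sum _ fun i _ => (hg_int i 0 n).1
    rw [h2]
    have h3 : ∀ i : Fin M, ∫ σ in Ioc (0:ℝ) n, g i σ ∂volume = x n i - x 0 i := by
      intro i
      rw [← intervalIntegral.integral_of_le hn0]
      exact (hx_sub i 0 n le_rfl hn0).symm
    calc ∑ i : Fin M, ∫ σ in Ioc (0:ℝ) n, g i σ ∂volume
        = ∑ i : Fin M, (x n i - x 0 i) := Finset.sum_congr rfl fun i _ => h3 i
      _ ≤ K := by
          rw [hK]
          exact Finset.sum_le_sum fun i _ => by linarith [hle n hn0 i]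
  have hNfin : volume (N ∩ Ioi 0) ≤ ENNReal.ofReal K := by
    have hEq : N ∩ Ioi 0 = ⋃ n : ℕ, (N ∩ Ioc 0 (n:ℝ)) := by
      ext σ
      simp only [mem_inter_iff, mem_iUnion, mem_Ioc, mem_Ioi]
      constructor
      · rintro ⟨h1, h2⟩
        obtain ⟨n, hn⟩ := exists_nat_ge σ
        exact ⟨n, h1, h2, hn⟩
      · rintro ⟨n, h1, h2, -⟩
        exact ⟨h1, h2⟩
    rw [hEq]
    have hmono : Monotone fun n : ℕ => N ∩ Ioc 0 (n:ℝ) := by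
      intro a b hab
      exact inter_subset_inter le_rfl (Ioc_subset_Ioc le_rfl (by exact_mod_cast hab))
    rw [hmono.measure_iUnion]
    exact iSup_le hboundn
  have hT : ∃ T, T ∈ Ioc (0:ℝ) (K + 1) ∧ T ∉ N := by
    by_contra hcon
    push_neg at hcon
    have hsub : Ioc (0:ℝ) (K + 1) ⊆ N ∩ Ioi 0 := fun σ hσ => ⟨hcon σ hσ, hσ.1⟩
    have hmeas := (measure_mono hsub).trans hNfin
    rw [Real.volume_Ioc] at hmeas
    rw [ENNReal.ofReal_le_ofReal_iff hK0] at hmeas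
    linarith
  obtain ⟨T, hTmem, hTN⟩ := hT
  refine ⟨T, hTmem.1.le, fun t ht i => ?_⟩
  have hT0 : (0:ℝ) ≤ T := hTmem.1.le
  have hxT : x T i = m := by
    refine le_antisymm (hle T hT0 i) ?_
    by_contra h
    push_neg at h
    exact hTN ⟨i, h⟩
  have hmono2 : x T i ≤ x t i := hx_mono i hT0 ht
  exact le_antisymm (hle t (hT0.trans ht) i) (by rw [← hxT]; exact hmono2)
end
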